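/- Growth of the (N,N) orbital integral: Let f : GL₂(ℂ) → ℂ be continuous and compactly supported. Then for every real ε > 0 there exist constants C, B > 0 such that |J(a, c, f)| ≤ C |a|^{2+ε} for all a, c ∈ ℂ ∖ {0} with |a| ≥ B. -/

import Mathlib

open MeasureTheory Filter Topology Complex
open scoped ENNReal


/-- `n(x) = [[1, x], [0, 1]]`. -/
def nMat (x : ℂ) : Matrix (Fin 2) (Fin 2) ℂ := !![1, x; 0, 1]

/-- `z(c) = [[c, 0], [0, c]]`. -/
def zMat (c : ℂ) : Matrix (Fin 2) (Fin 2) ℂ := !![c, 0; 0, c]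

/-- `s(a) = [[a, 0], [0, 1/a]]`. -/
noncomputable def sMat (a : ℂ) : Matrix (Fin 2) (Fin 2) ℂ := !![a, 0; 0, a⁻¹]

/-- `w₀ = [[0, 1], [1, 0]]`. -/
def w0Mat : Matrix (Fin 2) (Fin 2) ℂ := !![0, 1; 1, 0]

/-- The `(N,N)` orbital integral `J(a, c, f) = ∬ f(n(x) z(c) s(a) w₀ n(y)) dA(x) dA(y)`. -/
noncomputable def Jorb (f : Matrix (Fin 2) (Fin 2) ℂ → ℂ) (a c : ℂ) : ℂ :=
  ∫ p : ℂ × ℂ, f (nMat p.1 * zMat c * sMat a * w0Mat * nMat p.2)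

open Set Metric

lemma keyProd (a c x y : ℂ) :
    nMat x * zMat c * sMat a * w0Mat * nMat y =
      !![c*a⁻¹*x, c*a⁻¹*(x*y) + c*a; c*a⁻¹, c*a⁻¹*y] := by
  simp [nMat, zMat, sMat, w0Mat, Matrix.mul_fin_two]
  ring_nf
  exact ⟨trivial, trivial⟩

lemma keyDet (a c x y : ℂ) (ha : a ≠ 0) :
    (!![c*a⁻¹*x, c*a⁻¹*(x*y) + c*a; c*a⁻¹, c*a⁻¹*y] : Matrix (Fin 2) (Fin 2) ℂ).det
      = -(c^2) := by
  rw [Matrix.det_fin_two_of]; field_simp; ring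

lemma Uclosed (a : ℂ) (M : ℝ) : IsClosed {p : ℂ × ℂ |
    ‖p.1‖ ≤ M * ‖a‖ ∧
    ‖a‖ / (2*M) ≤ ‖p.1‖ ∧
    ‖(p.1 * p.2 + a^2)‖ ≤ 2*M^2 * ‖p.1‖} := by
  have h1 : IsClosed {p : ℂ × ℂ | ‖p.1‖ ≤ M * ‖a‖} :=
    isClosed_le (continuous_norm.comp continuous_fst) continuous_const
  have h2 : IsClosed {p : ℂ × ℂ | ‖a‖ / (2*M) ≤ ‖p.1‖} :=
    isClosed_le continuous_const (continuous_norm.comp continuous_fst)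
  have h3 : IsClosed {p : ℂ × ℂ |
      ‖(p.1 * p.2 + a^2)‖ ≤ 2*M^2 * ‖p.1‖} :=
    isClosed_le (continuous_norm.comp ((continuous_fst.mul continuous_snd).add
      continuous_const)) (continuous_const.mul (continuous_norm.comp continuous_fst))
  have he : {p : ℂ × ℂ |
      ‖p.1‖ ≤ M * ‖a‖ ∧
      ‖a‖ / (2*M) ≤ ‖p.1‖ ∧
      ‖(p.1 * p.2 + a^2)‖ ≤ 2*M^2 * ‖p.1‖} =
      {p : ℂ × ℂ | ‖p.1‖ ≤ M * ‖a‖} ∩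
      ({p : ℂ × ℂ | ‖a‖ / (2*M) ≤ ‖p.1‖} ∩
       {p : ℂ × ℂ | ‖(p.1 * p.2 + a^2)‖ ≤ 2*M^2 * ‖p.1‖}) := by
    ext p; simp [and_assoc]
  rw [he]; exact h1.inter (h2.inter h3)

lemma volU (a : ℂ) (M : ℝ) (hM : 0 < M) (hA : 0 < ‖a‖) :
    volume {p : ℂ × ℂ | ‖p.1‖ ≤ M * ‖a‖ ∧
        ‖a‖ / (2*M) ≤ ‖p.1‖ ∧
        ‖(p.1 * p.2 + a^2)‖ ≤ 2*M^2 * ‖p.1‖}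
      ≤ (ENNReal.ofReal (2*M^2))^2 * NNReal.pi *
          ((ENNReal.ofReal (M * ‖a‖))^2 * NNReal.pi) := by
  set A := ‖a‖ with hAdef
  set U : Set (ℂ × ℂ) := {p : ℂ × ℂ | ‖p.1‖ ≤ M * A ∧
        A / (2*M) ≤ ‖p.1‖ ∧
        ‖(p.1 * p.2 + a^2)‖ ≤ 2*M^2 * ‖p.1‖} with hUdef
  have hUmeas : MeasurableSet U := (Uclosed a M).measurableSet
  rw [Measure.volume_eq_prod ℂ ℂ, Measure.prod_apply hUmeas]
  have hpt : ∀ x : ℂ, volume (Prod.mk x ⁻¹' U) ≤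
      (closedBall (0:ℂ) (M*A)).indicator
        (fun _ => (ENNReal.ofReal (2*M^2))^2 * NNReal.pi) x := by
    intro x
    by_cases hx1 : ‖x‖ ≤ M * A
    · by_cases hx2 : A / (2*M) ≤ ‖x‖
      · have hxpos : 0 < ‖x‖ := lt_of_lt_of_le (by positivity) hx2
        have hx0 : x ≠ 0 := by
          intro h; rw [h] at hxpos; simp at hxpos
        have hsub : Prod.mk x ⁻¹' U ⊆ closedBall (-(a^2)/x) (2*M^2) := by
          intro y hy
          obtain ⟨-, -, h3⟩ := hy
          rw [mem_closedBall, dist_eq_norm]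
          have key : x * (y - -(a^2)/x) = x * y + a^2 := by field_simp; ring
          have : ‖x‖ * ‖(y - -(a^2)/x)‖ ≤ 2*M^2 * ‖x‖ := by
            rw [← norm_mul, key]; exact h3
          have habs : ‖(y - -(a^2)/x)‖ ≤ 2*M^2 := by nlinarith
          simpa using habs
        calc volume (Prod.mk x ⁻¹' U) ≤ volume (closedBall (-(a^2)/x) (2*M^2)) :=
              measure_mono hsub
          _ = (ENNReal.ofReal (2*M^2))^2 * NNReal.pi := by
              rw [Complex.volume_closedBall]
          _ = (closedBall (0:ℂ) (M*A)).indicator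
                (fun _ => (ENNReal.ofReal (2*M^2))^2 * NNReal.pi) x := by
              rw [Set.indicator_of_mem]
              simpa [mem_closedBall, Complex.dist_eq] using hx1
      · have : Prod.mk x ⁻¹' U = ∅ := by
          ext y; simp only [mem_preimage, mem_empty_iff_false, iff_false]
          intro hy; exact hx2 hy.2.1
        rw [this]; simp
    · have : Prod.mk x ⁻¹' U = ∅ := by
        ext y; simp only [mem_preimage, mem_empty_iff_false, iff_false]
        intro hy; exact hx1 hy.1
      rw [this]; simp
  calc (∫⁻ x, volume (Prod.mk x ⁻¹' U)) ≤
      ∫⁻ x, (closedBall (0:ℂ) (M*A)).indicator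
        (fun _ => (ENNReal.ofReal (2*M^2))^2 * NNReal.pi) x := lintegral_mono hpt
    _ = (ENNReal.ofReal (2*M^2))^2 * NNReal.pi * volume (closedBall (0:ℂ) (M*A)) :=
        lintegral_indicator_const measurableSet_closedBall _
    _ = (ENNReal.ofReal (2*M^2))^2 * NNReal.pi *
          ((ENNReal.ofReal (M * A))^2 * NNReal.pi) := by rw [Complex.volume_closedBall]


set_option maxHeartbeats 1000000 in
/-- **Growth of the `(N,N)` orbital integral.** For every `ε > 0` there are `C, B > 0` with
`|J(a, c, f)| ≤ C |a|^{2+ε}` for all `a, c ≠ 0` with `|a| ≥ B`. -/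
theorem NN_orbital_integral_growth (f : Matrix (Fin 2) (Fin 2) ℂ → ℂ)
    (hf : Continuous f) (hcs : HasCompactSupport f) (hGL : tsupport f ⊆ {g | g.det ≠ 0})
    (ε : ℝ) (hε : 0 < ε) :
    ∃ C > (0 : ℝ), ∃ B > (0 : ℝ), ∀ a c : ℂ, a ≠ 0 → c ≠ 0 → B ≤ ‖a‖ →
      ‖(Jorb f a c)‖ ≤ C * ‖a‖ ^ ((2 : ℝ) + ε) := by
  classical
  set K := tsupport f with hK
  by_cases hKe : K = ∅
  · refine ⟨1, one_pos, 1, one_pos, fun a c ha hc haB => ?_⟩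
    have hf0 : ∀ g, f g = 0 := by
      intro g
      by_contra h
      have : g ∈ K := subset_tsupport f h
      rw [hKe] at this; exact this
    have hz : Jorb f a c = 0 := by
      simp only [Jorb, hf0, integral_zero]
    rw [hz]
    have : (0:ℝ) ≤ ‖a‖ ^ ((2:ℝ) + ε) := Real.rpow_nonneg (by positivity) _
    simpa using this
  · obtain ⟨g₀, hg₀⟩ := Set.nonempty_iff_ne_empty.2 hKe
    obtain ⟨Kf, hKf⟩ : ∃ Kf : ℝ, ∀ g, ‖f g‖ ≤ Kf := hf.bounded_above_of_compact_support hcs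
    have hKf0 : 0 ≤ Kf := le_trans (norm_nonneg _) (hKf g₀)
    have hcont : ContinuousOn (fun g : Matrix (Fin 2) (Fin 2) ℂ =>
        ‖(g 0 0)‖ + ‖(g 0 1)‖ + ‖(g 1 0)‖
          + ‖(g 1 1)‖) K := by
      refine Continuous.continuousOn ?_
      have h00 : Continuous fun g : Matrix (Fin 2) (Fin 2) ℂ => g 0 0 :=
        (continuous_apply (0:Fin 2)).comp (continuous_apply (0:Fin 2))
      have h01 : Continuous fun g : Matrix (Fin 2) (Fin 2) ℂ => g 0 1 :=
        (continuous_apply (1:Fin 2)).comp (continuous_apply (0:Fin 2))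
      have h10 : Continuous fun g : Matrix (Fin 2) (Fin 2) ℂ => g 1 0 :=
        (continuous_apply (0:Fin 2)).comp (continuous_apply (1:Fin 2))
      have h11 : Continuous fun g : Matrix (Fin 2) (Fin 2) ℂ => g 1 1 :=
        (continuous_apply (1:Fin 2)).comp (continuous_apply (1:Fin 2))
      exact (((continuous_norm.comp h00).add (continuous_norm.comp h01)).add
        (continuous_norm.comp h10)).add (continuous_norm.comp h11)
    obtain ⟨R₀, hR₀⟩ := hcs.exists_bound_of_continuousOn hcont
    set R : ℝ := R₀ + 1 with hRdef
    have hRpos : 0 < R := by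
      have h := hR₀ g₀ hg₀
      have hnn : (0:ℝ) ≤ ‖(g₀ 0 0)‖ + ‖(g₀ 0 1)‖ +
          ‖(g₀ 1 0)‖ + ‖(g₀ 1 1)‖ := by positivity
      have : (0:ℝ) ≤ R₀ := le_trans hnn (le_trans (le_abs_self _) (by simpa using h))
      simp only [hRdef]; linarith
    have hRent : ∀ g ∈ K, ‖(g 0 0)‖ ≤ R ∧ ‖(g 0 1)‖ ≤ R ∧
        ‖(g 1 0)‖ ≤ R ∧ ‖(g 1 1)‖ ≤ R := by
      intro g hg
      have h := hR₀ g hg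
      have h' : ‖(g 0 0)‖ + ‖(g 0 1)‖ + ‖(g 1 0)‖
          + ‖(g 1 1)‖ ≤ R₀ := le_trans (le_abs_self _) (by simpa using h)
      have n00 : (0:ℝ) ≤ ‖(g 0 0)‖ := norm_nonneg _
      have n01 : (0:ℝ) ≤ ‖(g 0 1)‖ := norm_nonneg _
      have n10 : (0:ℝ) ≤ ‖(g 1 0)‖ := norm_nonneg _
      have n11 : (0:ℝ) ≤ ‖(g 1 1)‖ := norm_nonneg _
      refine ⟨by simp only [hRdef]; linarith, by simp only [hRdef]; linarith,
        by simp only [hRdef]; linarith, by simp only [hRdef]; linarith⟩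
    have hdetcont : ContinuousOn (fun g : Matrix (Fin 2) (Fin 2) ℂ => ‖g.det‖) K :=
      (continuous_norm.comp (Continuous.matrix_det continuous_id)).continuousOn
    obtain ⟨gm, hgmK, hgmmin⟩ := hcs.exists_isMinOn ⟨g₀, hg₀⟩ hdetcont
    set δ : ℝ := ‖gm.det‖ with hδdef
    have hδpos : 0 < δ := by
      have : gm.det ≠ 0 := hGL hgmK
      simpa [hδdef] using (norm_pos_iff.2 this)
    have hδle : ∀ g ∈ K, δ ≤ ‖g.det‖ := fun g hg => hgmmin hg
    set s : ℝ := Real.sqrt δ with hsdef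
    have hspos : 0 < s := Real.sqrt_pos.2 hδpos
    set M : ℝ := R / s with hMdef
    have hMpos : 0 < M := div_pos hRpos hspos
    refine ⟨Kf * (2*M^2)^2 * Real.pi^2 * M^2 + 1, by positivity, 2*M + 1,
      by positivity, fun a c ha hc haB => ?_⟩
    set A := ‖a‖ with hAdef
    have hApos : 0 < A := norm_pos_iff.2 ha
    have hA1 : (1:ℝ) ≤ A := by linarith
    have hA2M : 2*M ≤ A := by linarith
    set U : Set (ℂ × ℂ) := {p : ℂ × ℂ | ‖p.1‖ ≤ M * A ∧
        A / (2*M) ≤ ‖p.1‖ ∧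
        ‖(p.1 * p.2 + a^2)‖ ≤ 2*M^2 * ‖p.1‖} with hUdef
    have hUmeas : MeasurableSet U := (Uclosed a M).measurableSet
    set g : ℂ × ℂ → Matrix (Fin 2) (Fin 2) ℂ :=
      fun p => nMat p.1 * zMat c * sMat a * w0Mat * nMat p.2 with hgdef
    have hpt : ∀ p : ℂ × ℂ, ENNReal.ofReal ‖f (g p)‖ ≤
        U.indicator (fun _ => ENNReal.ofReal Kf) p := by
      intro p
      by_cases hp : g p ∈ K
      · have hgp : g p = !![c*a⁻¹*p.1, c*a⁻¹*(p.1*p.2) + c*a; c*a⁻¹, c*a⁻¹*p.2] :=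
          keyProd a c p.1 p.2
        have hdet : δ ≤ ‖(g p).det‖ := hδle _ hp
        have hcs2 : s ≤ ‖c‖ := by
          rw [hgp, keyDet a c p.1 p.2 ha] at hdet
          have he : ‖(-(c^2))‖ = ‖c‖ ^ 2 := by simp
          rw [he] at hdet
          calc s = Real.sqrt δ := rfl
            _ ≤ Real.sqrt (‖c‖ ^ 2) := Real.sqrt_le_sqrt hdet
            _ = ‖c‖ := Real.sqrt_sq (norm_nonneg _)
        obtain ⟨h00, h01, h10, h11⟩ := hRent _ hp
        rw [hgp] at h00 h01 h11
        simp only [Matrix.cons_val', Matrix.cons_val_zero, Matrix.cons_val_one,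
          Matrix.head_cons, Matrix.empty_val', Matrix.cons_val_fin_one, Matrix.head_fin_const,
          Matrix.of_apply] at h00 h01 h11
        set Cc := ‖c‖ with hCcdef
        have hCcpos : 0 < Cc := lt_of_lt_of_le hspos hcs2
        have helper : ∀ w : ℂ, ‖(c * a⁻¹ * w)‖ ≤ R → ‖w‖ ≤ M * A := by
          intro w hw
          have e : ‖(c*a⁻¹*w)‖ = Cc * A⁻¹ * ‖w‖ := by
            rw [norm_mul, norm_mul, norm_inv]
          rw [e] at hw
          have h1 : Cc * ‖w‖ ≤ R * A := by
            have h2 := mul_le_mul_of_nonneg_right hw hApos.le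
            calc Cc * ‖w‖ = Cc * A⁻¹ * ‖w‖ * A := by
                  field_simp
              _ ≤ R * A := h2
          have h3 : s * ‖w‖ ≤ R * A :=
            le_trans (mul_le_mul_of_nonneg_right hcs2 (norm_nonneg _)) h1
          rw [hMdef, div_mul_eq_mul_div, le_div_iff₀ hspos]
          nlinarith
        have hx : ‖p.1‖ ≤ M * A := helper p.1 h00
        have hy : ‖p.2‖ ≤ M * A := helper p.2 h11
        have hxy : ‖(p.1 * p.2 + a^2)‖ ≤ M * A := by
          apply helper
          have e01 : c*a⁻¹*(p.1*p.2) + c*a = c*a⁻¹*(p.1*p.2 + a^2) := by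
            field_simp
          rw [← e01]; exact h01
        -- lower bound on |p.1|
        have htri : A^2 ≤ ‖(p.1*p.2 + a^2)‖ + ‖(p.1*p.2)‖ := by
          have h := norm_add_le (p.1*p.2 + a^2) (-(p.1*p.2))
          have e : p.1*p.2 + a^2 + -(p.1*p.2) = a^2 := by ring
          rw [e] at h
          have e2 : ‖(a^2)‖ = A^2 := by rw [norm_pow]
          have e3 : ‖(-(p.1*p.2))‖ = ‖(p.1*p.2)‖ := by simp
          rw [e2, e3] at h
          exact h
        have hprod : A^2 - M*A ≤ ‖p.1‖ * ‖p.2‖ := by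
          rw [← norm_mul]; linarith
        have hxlow : A / (2*M) ≤ ‖p.1‖ := by
          rw [div_le_iff₀ (by positivity)]
          nlinarith [norm_nonneg p.1,
            mul_le_mul_of_nonneg_left hy (norm_nonneg p.1)]
        have hxy2 : ‖(p.1*p.2 + a^2)‖ ≤ 2*M^2 * ‖p.1‖ := by
          have h5 : A ≤ ‖p.1‖ * (2*M) := by
            rwa [div_le_iff₀ (by positivity)] at hxlow
          have h6 : M*A ≤ M*(‖p.1‖ * (2*M)) :=
            mul_le_mul_of_nonneg_left h5 hMpos.le
          exact hxy.trans (h6.trans_eq (by ring))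
        have pU : p ∈ U := ⟨hx, hxlow, hxy2⟩
        rw [Set.indicator_of_mem pU]
        exact ENNReal.ofReal_le_ofReal (hKf _)
      · rw [image_eq_zero_of_notMem_tsupport hp]
        simp
    -- main bound
    have hJeq : Jorb f a c = ∫ p : ℂ × ℂ, f (g p) := rfl
    have h1 : ‖Jorb f a c‖ ≤ (∫⁻ p : ℂ × ℂ, ENNReal.ofReal ‖f (g p)‖).toReal := by
      rw [hJeq]; exact norm_integral_le_lintegral_norm _
    set E : ℝ≥0∞ := ENNReal.ofReal Kf * ((ENNReal.ofReal (2*M^2))^2 * NNReal.pi *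
        ((ENNReal.ofReal (M * A))^2 * NNReal.pi)) with hEdef
    have hEne : E ≠ ⊤ := by
      rw [hEdef]
      exact ENNReal.mul_ne_top ENNReal.ofReal_ne_top (ENNReal.mul_ne_top
        (ENNReal.mul_ne_top (ENNReal.pow_ne_top ENNReal.ofReal_ne_top)
          ENNReal.coe_ne_top)
        (ENNReal.mul_ne_top (by simp [ENNReal.pow_ne_top ENNReal.ofReal_ne_top])
          ENNReal.coe_ne_top))
    have h2 : (∫⁻ p : ℂ × ℂ, ENNReal.ofReal ‖f (g p)‖) ≤ E := by
      calc (∫⁻ p : ℂ × ℂ, ENNReal.ofReal ‖f (g p)‖)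
          ≤ ∫⁻ p, U.indicator (fun _ => ENNReal.ofReal Kf) p := lintegral_mono hpt
        _ = ENNReal.ofReal Kf * volume U := lintegral_indicator_const hUmeas _
        _ ≤ E := by
            rw [hEdef]
            exact mul_le_mul_right (volU a M hMpos hApos) _
    have h3 : ‖(Jorb f a c)‖ ≤ E.toReal := by
      exact le_trans h1 (ENNReal.toReal_mono hEne h2)
    have h4 : E.toReal = Kf * ((2*M^2)^2 * Real.pi * ((M*A)^2 * Real.pi)) := by
      rw [hEdef, ENNReal.toReal_mul, ENNReal.toReal_mul, ENNReal.toReal_mul,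
        ENNReal.toReal_mul, ENNReal.toReal_pow, ENNReal.toReal_pow,
        ENNReal.toReal_ofReal hKf0, ENNReal.toReal_ofReal (by positivity),
        ENNReal.toReal_ofReal (by positivity), ENNReal.coe_toReal, NNReal.coe_real_pi]
    have hA2 : A^2 ≤ A^((2:ℝ)+ε) := by
      have h5 : A^(2:ℕ) = A^((2:ℕ):ℝ) := (Real.rpow_natCast A 2).symm
      rw [h5]
      exact Real.rpow_le_rpow_of_exponent_le hA1 (by push_cast; linarith)
    have hD0 : (0:ℝ) ≤ Kf * (2*M^2)^2 * Real.pi^2 * M^2 := by positivity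
    calc ‖(Jorb f a c)‖ ≤ E.toReal := h3
      _ = Kf * (2*M^2)^2 * Real.pi^2 * M^2 * A^2 := by rw [h4]; ring
      _ ≤ Kf * (2*M^2)^2 * Real.pi^2 * M^2 * A^((2:ℝ)+ε) :=
          mul_le_mul_of_nonneg_left hA2 hD0
      _ ≤ (Kf * (2*M^2)^2 * Real.pi^2 * M^2 + 1) * A^((2:ℝ)+ε) := by
          nlinarith [Real.rpow_nonneg hApos.le ((2:ℝ)+ε)]
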